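/- arXiv:1511.05886 — 4 statements merged into one kernel-verified Lean document; each statement's English description precedes it below -/
import Mathlib

section
/- Advice lower bound for weighted binary string guessing (Theorem 16). Let n ≥ 1 and b be natural numbers, let 0 < s ≤ t be reals, and let 0 < α < s·t/(s+t). Let μ be a randomized algorithm reading b bits of advice for the n-round guessing game over the binary alphabet Fin 2 (a PMF over pairs (φ, g) as below), whose cost on input x : Fin n → Fin 2 for a pair (φ,g) is Σ_i c(x_i, y_i), where y_i is the answer of (φ,g) in round i and c(0,1) = s, c(1,0) = t, c(0,0) = c(1,1) = 0. If E_{(φ,g)∼μ}[cost on x] ≤ α·n for every input x, then b ≥ K_{s/(s+t)}(α/t)·n. -/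
open Classical

/-- The binary-divergence-type function `K_y(x) = x log₂(x/y) + (1-x) log₂((1-x)/(1-y))`. -/
noncomputable def Kfun (y x : ℝ) : ℝ :=
  x * Real.logb 2 (x / y) + (1 - x) * Real.logb 2 ((1 - x) / (1 - y))

/-- A deterministic algorithm reading `b` bits of advice for an `n`-round guessing game
with known history over the alphabet `Fin q`. -/
abbrev AdviceAlg (n q b : ℕ) : Type :=
  ((Fin n → Fin q) → Fin (2 ^ b)) ×
    (Fin (2 ^ b) → (i : Fin n) → ({j : Fin n // j < i} → Fin q) → Fin q)

lemma sum_pi_succ {β : Type*} [Fintype β] {n : ℕ} (F : (Fin (n+1) → β) → ℝ) :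
    ∑ x : Fin (n+1) → β, F x = ∑ v : β, ∑ x' : Fin n → β, F (Fin.cons v x') := by
  rw [← Equiv.sum_comp (Fin.consEquiv fun _ => β) F, Fintype.sum_prod_type]
  rfl

lemma sum_prod_pow {β : Type*} [Fintype β] (n : ℕ) (q : β → ℝ) :
    ∑ x : Fin n → β, ∏ i, q (x i) = (∑ v, q v) ^ n := by
  induction n with
  | zero => simp
  | succ m ih =>
    rw [sum_pi_succ (fun x => ∏ i, q (x i))]
    have key : ∀ v : β, ∀ x' : Fin m → β,
        (∏ i, q ((Fin.cons v x' : Fin (m+1) → β) i)) = q v * ∏ i, q (x' i) := by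
      intro v x'
      rw [Fin.prod_univ_succ]
      simp only [Fin.cons_zero, Fin.cons_succ]
    calc ∑ v : β, ∑ x' : Fin m → β, ∏ i, q ((Fin.cons v x' : Fin (m+1) → β) i)
        = ∑ v : β, ∑ x' : Fin m → β, q v * ∏ i, q (x' i) := by
          refine Finset.sum_congr rfl fun v _ => Finset.sum_congr rfl fun x' _ => key v x'
      _ = (∑ v, q v) * (∑ x' : Fin m → β, ∏ i, q (x' i)) := by
          rw [Finset.sum_mul]
          refine Finset.sum_congr rfl fun v _ => ?_
          rw [Finset.mul_sum]
      _ = (∑ v, q v) ^ (m+1) := by rw [ih, pow_succ]; ring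

/-- The residual strategy after fixing the first input bit `v`. -/
def resid {β : Type*} {m : ℕ}
    (f : (i : Fin (m+1)) → ({j : Fin (m+1) // j < i} → β) → β) (v : β) :
    (i : Fin m) → ({j : Fin m // j < i} → β) → β :=
  fun i h => f i.succ (fun j =>
    if hj : (j.1 : ℕ) = 0 then v
    else h ⟨⟨(j.1 : ℕ) - 1, by have := j.1.isLt; omega⟩, by
      have h2 : (j.1 : ℕ) < (i.succ : ℕ) := j.2
      have h3 : (i.succ : ℕ) = (i : ℕ) + 1 := rfl
      simpa [Fin.lt_def] using by omega⟩)

lemma resid_spec {β : Type*} {m : ℕ}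
    (f : (i : Fin (m+1)) → ({j : Fin (m+1) // j < i} → β) → β) (v : β)
    (x' : Fin m → β) (i : Fin m) :
    f i.succ (fun j => (Fin.cons v x' : Fin (m+1) → β) j.1)
      = resid f v i (fun k => x' k.1) := by
  unfold resid
  congr 1
  funext j
  by_cases hj : (j.1 : ℕ) = 0
  · simp only [hj, dif_pos]
    have hz : j.1 = 0 := Fin.ext hj
    rw [hz, Fin.cons_zero]
  · simp only [hj, dif_neg, not_false_iff]
    have hlt : (j.1 : ℕ) - 1 < m := by have := j.1.isLt; omega
    have hjs : j.1 = Fin.succ ⟨(j.1 : ℕ) - 1, hlt⟩ := by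
      apply Fin.ext
      simp only [Fin.val_succ]
      omega
    conv_lhs => rw [hjs]
    rw [Fin.cons_succ]

lemma key_strategy_bound (w : Fin 2 → Fin 2 → ℝ) (hw : ∀ v u, 0 ≤ w v u) (r : ℝ)
    (hr : ∀ u, (∑ v, w v u) ≤ r) :
    ∀ (n : ℕ) (f : (i : Fin n) → ({j : Fin n // j < i} → Fin 2) → Fin 2),
    ∑ x : Fin n → Fin 2, ∏ i, w (x i) (f i (fun j => x j.1)) ≤ r ^ n := by
  have hr0 : 0 ≤ r := le_trans (Finset.sum_nonneg fun v _ => hw v 0) (hr 0)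
  intro n
  induction n with
  | zero => intro f; simp
  | succ m ih =>
    intro f
    rw [sum_pi_succ (fun x => ∏ i, w (x i) (f i (fun j => x j.1)))]
    have hemp : {j : Fin (m+1) // j < (0 : Fin (m+1))} → Fin 2 :=
      fun j => absurd j.2 (by simp [Fin.lt_def])
    have hsplit : ∀ (v : Fin 2) (x' : Fin m → Fin 2),
        (∏ i, w ((Fin.cons v x' : Fin (m+1) → Fin 2) i)
          (f i (fun j => (Fin.cons v x' : Fin (m+1) → Fin 2) j.1)))
        = w v (f 0 hemp) * ∏ i, w (x' i) (resid f v i (fun k => x' k.1)) := by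
      intro v x'
      rw [Fin.prod_univ_succ]
      have h1 : (fun j : {j : Fin (m+1) // j < (0 : Fin (m+1))} =>
          (Fin.cons v x' : Fin (m+1) → Fin 2) j.1) = hemp :=
        funext fun j => absurd j.2 (by simp [Fin.lt_def])
      rw [h1, Fin.cons_zero]
      congr 1
      refine Finset.prod_congr rfl fun i _ => ?_
      rw [Fin.cons_succ]
      exact congrArg (w (x' i)) (resid_spec f v x' i)
    calc ∑ v : Fin 2, ∑ x' : Fin m → Fin 2,
          ∏ i, w ((Fin.cons v x' : Fin (m+1) → Fin 2) i)
            (f i (fun j => (Fin.cons v x' : Fin (m+1) → Fin 2) j.1))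
        = ∑ v : Fin 2, ∑ x' : Fin m → Fin 2,
            w v (f 0 hemp) * ∏ i, w (x' i) (resid f v i (fun k => x' k.1)) := by
          refine Finset.sum_congr rfl fun v _ => Finset.sum_congr rfl fun x' _ => hsplit v x'
      _ = ∑ v : Fin 2, w v (f 0 hemp) *
            ∑ x' : Fin m → Fin 2, ∏ i, w (x' i) (resid f v i (fun k => x' k.1)) := by
          refine Finset.sum_congr rfl fun v _ => ?_
          rw [Finset.mul_sum]
      _ ≤ ∑ v : Fin 2, w v (f 0 hemp) * r ^ m := by
          refine Finset.sum_le_sum fun v _ => ?_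
          exact mul_le_mul_of_nonneg_left (ih (resid f v)) (hw _ _)
      _ = (∑ v, w v (f 0 hemp)) * r ^ m := by rw [Finset.sum_mul]
      _ ≤ r * r ^ m := mul_le_mul_of_nonneg_right (hr _) (pow_nonneg hr0 m)
      _ = r ^ (m+1) := by rw [pow_succ]; ring

set_option maxHeartbeats 2000000 in
/-- Advice lower bound for weighted binary string guessing (Theorem 16):
with per-round cost `c(0,1)=s`, `c(1,0)=t`, `c(0,0)=c(1,1)=0`, a randomized algorithm
reading `b` bits of advice with expected cost at most `α·n` on every input satisfies
`b ≥ K_{s/(s+t)}(α/t)·n`. -/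

theorem weighted_bsg_lower_bound
    {n b : ℕ} (hn : 1 ≤ n)
    (s t : ℝ) (hs : 0 < s) (hst : s ≤ t)
    (α : ℝ) (hα0 : 0 < α) (hα1 : α < s * t / (s + t))
    (μ : AdviceAlg n 2 b → ℝ) (hμ0 : ∀ a, 0 ≤ μ a) (hμ1 : ∑ a, μ a = 1)
    (hperf : ∀ x : Fin n → Fin 2,
      (∑ alg, μ alg * ∑ i,
          (if x i = alg.2 (alg.1 x) i (fun j => x j.1) then (0 : ℝ)
            else if x i = 0 then s else t))
        ≤ α * n) :
    (b : ℝ) ≥ Kfun (s / (s + t)) (α / t) * n := by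
  have ht : (0:ℝ) < t := lt_of_lt_of_le hs hst
  have hst0 : (0:ℝ) < s + t := by linarith
  have hαst : α * (s + t) < s * t := (lt_div_iff₀ hst0).mp hα1
  have hαt : α < t := by nlinarith
  have htα : (0:ℝ) < t - α := by linarith
  set c : ℝ := α * t / (s * (t - α)) with hc_def
  have hc0 : 0 < c := by rw [hc_def]; positivity
  have hc1 : c < 1 := by
    rw [hc_def, div_lt_one (by positivity)]
    nlinarith
  set lam : ℝ := -(Real.log c) / t with hlam_def
  have hlam0 : 0 < lam := by
    have hlc := Real.log_neg hc0 hc1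
    rw [hlam_def]
    apply div_pos (by linarith) ht
  set r : ℝ := (s * c + t) / (s + t) with hr_def
  have hr0 : 0 < r := by rw [hr_def]; positivity
  have hexp_t : Real.exp (-(lam * t)) = c := by
    rw [hlam_def, show -(-Real.log c / t * t) = Real.log c by field_simp]
    exact Real.exp_log hc0
  have hexp_s : Real.exp (-(lam * s)) = c ^ (s / t) := by
    rw [Real.rpow_def_of_pos hc0, hlam_def]
    congr 1
    field_simp
    try ring
  set q : Fin 2 → ℝ := fun v => if v = 0 then t / (s+t) else s / (s+t) with hq_def
  have hq0 : ∀ v, 0 ≤ q v := by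
    intro v; rw [hq_def]; dsimp only; split <;> positivity
  have hqsum : q 0 + q 1 = 1 := by
    rw [hq_def]; norm_num
    field_simp
    try ring
  set w : Fin 2 → Fin 2 → ℝ := fun v u =>
    q v * Real.exp (-lam * (if v = u then (0:ℝ) else if v = 0 then s else t)) with hw_def
  have hw0 : ∀ v u, 0 ≤ w v u := by
    intro v u; rw [hw_def]; exact mul_nonneg (hq0 v) (Real.exp_pos _).le
  have hcol : ∀ u, (∑ v, w v u) ≤ r := by
    intro u
    rw [Fin.sum_univ_two, hw_def]
    fin_cases u
    · norm_num
      rw [hexp_t, hq_def]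
      norm_num
      rw [hr_def]
      have heq2 : t/(s+t) + s/(s+t)*c = (s*c+t)/(s+t) := by field_simp; ring
      linarith
    · norm_num
      rw [hexp_s, hq_def]
      norm_num
      have hamgm : c ^ (s/t) * 1 ^ (1 - s/t) ≤ (s/t) * c + (1 - s/t) * 1 :=
        Real.geom_mean_le_arith_mean2_weighted (by positivity)
          (by rw [sub_nonneg, div_le_one ht]; exact hst) hc0.le zero_le_one (by field_simp; ring)
      rw [Real.one_rpow, mul_one, mul_one] at hamgm
      have h2 : t/(s+t) * (c ^ (s/t)) + s/(s+t) ≤ t/(s+t) * ((s/t)*c + (1 - s/t)) + s/(s+t) := by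
        have := mul_le_mul_of_nonneg_left hamgm (le_of_lt (div_pos ht hst0))
        linarith
      have h3 : t/(s+t) * ((s/t)*c + (1 - s/t)) + s/(s+t) = r := by
        rw [hr_def]; field_simp; ring
      linarith
  -- key bound for a fixed advice value
  have hkey : ∀ (g : Fin (2^b) → (i : Fin n) → ({j : Fin n // j < i} → Fin 2) → Fin 2)
      (a : Fin (2^b)),
      ∑ x : Fin n → Fin 2, (∏ i, q (x i)) * Real.exp (-lam * ∑ i,
        (if x i = g a i (fun j => x j.1) then (0:ℝ) else if x i = 0 then s else t))
      ≤ r ^ n := by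
    intro g a
    have heq : ∀ x : Fin n → Fin 2,
        (∏ i, q (x i)) * Real.exp (-lam * ∑ i,
          (if x i = g a i (fun j => x j.1) then (0:ℝ) else if x i = 0 then s else t))
        = ∏ i, w (x i) (g a i (fun j => x j.1)) := by
      intro x
      rw [Finset.mul_sum, Real.exp_sum, ← Finset.prod_mul_distrib]
    rw [Finset.sum_congr rfl fun x _ => heq x]
    exact key_strategy_bound w hw0 r hcol n (g a)
  -- per-algorithm bound
  have halg : ∀ alg : AdviceAlg n 2 b,
      ∑ x : Fin n → Fin 2, (∏ i, q (x i)) * Real.exp (-lam * ∑ i,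
        (if x i = alg.2 (alg.1 x) i (fun j => x j.1) then (0:ℝ) else if x i = 0 then s else t))
      ≤ (2^b : ℝ) * r ^ n := by
    intro alg
    calc ∑ x : Fin n → Fin 2, (∏ i, q (x i)) * Real.exp (-lam * ∑ i,
          (if x i = alg.2 (alg.1 x) i (fun j => x j.1) then (0:ℝ) else if x i = 0 then s else t))
        ≤ ∑ x : Fin n → Fin 2, (∏ i, q (x i)) * ∑ a : Fin (2^b), Real.exp (-lam * ∑ i,
          (if x i = alg.2 a i (fun j => x j.1) then (0:ℝ) else if x i = 0 then s else t)) := by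
          refine Finset.sum_le_sum fun x _ => ?_
          refine mul_le_mul_of_nonneg_left ?_ (Finset.prod_nonneg fun i _ => hq0 _)
          exact Finset.single_le_sum
            (f := fun a => Real.exp (-lam * ∑ i,
              (if x i = alg.2 a i (fun j => x j.1) then (0:ℝ) else if x i = 0 then s else t)))
            (fun a _ => (Real.exp_pos _).le) (Finset.mem_univ (alg.1 x))
      _ = ∑ a : Fin (2^b), ∑ x : Fin n → Fin 2, (∏ i, q (x i)) * Real.exp (-lam * ∑ i,
          (if x i = alg.2 a i (fun j => x j.1) then (0:ℝ) else if x i = 0 then s else t)) := by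
          rw [← Finset.sum_comm]
          refine Finset.sum_congr rfl fun x _ => ?_
          rw [Finset.mul_sum]
      _ ≤ ∑ _a : Fin (2^b), r ^ n := Finset.sum_le_sum fun a _ => hkey alg.2 a
      _ = (2^b : ℝ) * r ^ n := by
          rw [Finset.sum_const, Finset.card_univ, Fintype.card_fin, nsmul_eq_mul]
          push_cast
          ring
  -- Jensen over the joint distribution
  have hνsum : ∑ x : Fin n → Fin 2, ∏ i, q (x i) = 1 := by
    rw [sum_prod_pow, Fin.sum_univ_two, hqsum, one_pow]
  set W : AdviceAlg n 2 b × (Fin n → Fin 2) → ℝ := fun p => μ p.1 * ∏ i, q (p.2 i)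
    with hW_def
  set Z : AdviceAlg n 2 b × (Fin n → Fin 2) → ℝ := fun p => -lam * ∑ i,
    (if p.2 i = p.1.2 (p.1.1 p.2) i (fun j => p.2 j.1) then (0:ℝ)
      else if p.2 i = 0 then s else t) with hZ_def
  have hW0 : ∀ p, 0 ≤ W p := by
    intro p; rw [hW_def]
    exact mul_nonneg (hμ0 _) (Finset.prod_nonneg fun i _ => hq0 _)
  have hW1 : ∑ p, W p = 1 := by
    rw [Fintype.sum_prod_type]
    have : ∀ alg : AdviceAlg n 2 b, ∑ x : Fin n → Fin 2, W (alg, x) = μ alg := by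
      intro alg
      rw [hW_def]
      dsimp only
      rw [← Finset.mul_sum, hνsum, mul_one]
    rw [Finset.sum_congr rfl fun alg _ => this alg, hμ1]
  have hjen : Real.exp (∑ p, W p * Z p) ≤ ∑ p, W p * Real.exp (Z p) := by
    have h := convexOn_exp.map_sum_le (t := Finset.univ) (w := W) (p := Z)
      (fun i _ => hW0 i) hW1 (fun i _ => Set.mem_univ _)
    simpa [smul_eq_mul] using h
  have hsumWZ : -lam * (α * n) ≤ ∑ p, W p * Z p := by
    have h1 : ∑ p, W p * Z p
        = ∑ x : Fin n → Fin 2, (∏ i, q (x i)) * (-lam * (∑ alg, μ alg * ∑ i,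
            (if x i = alg.2 (alg.1 x) i (fun j => x j.1) then (0:ℝ)
              else if x i = 0 then s else t))) := by
      rw [Fintype.sum_prod_type, Finset.sum_comm]
      refine Finset.sum_congr rfl fun x _ => ?_
      rw [Finset.mul_sum, Finset.mul_sum]
      refine Finset.sum_congr rfl fun alg _ => ?_
      rw [hW_def, hZ_def]
      dsimp only
      ring
    rw [h1]
    have h2 : ∀ x : Fin n → Fin 2,
        (∏ i, q (x i)) * (-lam * (α * n)) ≤ (∏ i, q (x i)) * (-lam * (∑ alg, μ alg * ∑ i,
            (if x i = alg.2 (alg.1 x) i (fun j => x j.1) then (0:ℝ)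
              else if x i = 0 then s else t))) := by
      intro x
      refine mul_le_mul_of_nonneg_left ?_ (Finset.prod_nonneg fun i _ => hq0 _)
      exact mul_le_mul_of_nonpos_left (hperf x) (by linarith)
    calc -lam * (α * n) = ∑ x : Fin n → Fin 2, (∏ i, q (x i)) * (-lam * (α * n)) := by
          rw [← Finset.sum_mul, hνsum, one_mul]
      _ ≤ _ := Finset.sum_le_sum fun x _ => h2 x
  have hfinal : Real.exp (-lam * (α * n)) ≤ (2^b : ℝ) * r ^ n := by
    calc Real.exp (-lam * (α * n)) ≤ Real.exp (∑ p, W p * Z p) := Real.exp_le_exp.mpr hsumWZ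
      _ ≤ ∑ p, W p * Real.exp (Z p) := hjen
      _ = ∑ alg : AdviceAlg n 2 b, μ alg * (∑ x : Fin n → Fin 2,
            (∏ i, q (x i)) * Real.exp (-lam * ∑ i,
              (if x i = alg.2 (alg.1 x) i (fun j => x j.1) then (0:ℝ)
                else if x i = 0 then s else t))) := by
          rw [Fintype.sum_prod_type]
          refine Finset.sum_congr rfl fun alg _ => ?_
          rw [Finset.mul_sum]
          refine Finset.sum_congr rfl fun x _ => ?_
          rw [hW_def, hZ_def]
          dsimp only
          ring
      _ ≤ ∑ alg : AdviceAlg n 2 b, μ alg * ((2^b : ℝ) * r ^ n) :=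
          Finset.sum_le_sum fun alg _ => mul_le_mul_of_nonneg_left (halg alg) (hμ0 alg)
      _ = (2^b : ℝ) * r ^ n := by rw [← Finset.sum_mul, hμ1, one_mul]
  -- take logarithms
  have hpow0 : (0:ℝ) < (2^b : ℝ) * r ^ n := by positivity
  have hlog : -lam * (α * n) ≤ Real.log ((2^b : ℝ) * r ^ n) :=
    (Real.le_log_iff_exp_le hpow0).mpr hfinal
  have hlogeval : Real.log ((2^b : ℝ) * r ^ n) = b * Real.log 2 + n * Real.log r := by
    rw [Real.log_mul (by positivity) (by positivity), Real.log_pow, Real.log_pow]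
  -- the exact log identity
  have hX0 : 0 < α/t := div_pos hα0 ht
  have hX1 : α/t < 1 := (div_lt_one ht).mpr hαt
  have hY0 : 0 < s/(s+t) := div_pos hs hst0
  have hY1 : s/(s+t) < 1 := (div_lt_one hst0).mpr (by linarith)
  have h1X : 0 < 1 - α/t := by linarith
  have h1Y : 0 < 1 - s/(s+t) := by linarith
  have hlogc : Real.log c = Real.log (α/t) + Real.log (1 - s/(s+t))
      - Real.log (s/(s+t)) - Real.log (1 - α/t) := by
    have hceq : c = ((α/t) * (1 - s/(s+t))) / ((s/(s+t)) * (1 - α/t)) := by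
      rw [hc_def]; field_simp; ring
    rw [hceq, Real.log_div (by positivity) (by positivity),
      Real.log_mul hX0.ne' h1Y.ne', Real.log_mul hY0.ne' h1X.ne']
    ring
  have hlogr : Real.log r = Real.log (1 - s/(s+t)) - Real.log (1 - α/t) := by
    have hreq : r = (1 - s/(s+t)) / (1 - α/t) := by
      rw [hr_def, hc_def]; field_simp; ring
    rw [hreq, Real.log_div h1Y.ne' h1X.ne']
  have hl2 : Real.log 2 ≠ 0 := (Real.log_pos one_lt_two).ne'
  have hKeq : (-lam) * α - Real.log r = Kfun (s/(s+t)) (α/t) * Real.log 2 := by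
    have hlam_alpha : (-lam) * α = (α/t) * Real.log c := by
      rw [hlam_def]; field_simp
    rw [hlam_alpha, hlogc, hlogr]
    unfold Kfun Real.logb
    rw [Real.log_div hX0.ne' hY0.ne', Real.log_div h1X.ne' h1Y.ne']
    field_simp
    ring
  -- conclude
  have hl2pos : 0 < Real.log 2 := Real.log_pos one_lt_two
  have h' : ((-lam) * α - Real.log r) * n ≤ (b:ℝ) * Real.log 2 := by
    have hexpand : ((-lam) * α - Real.log r) * n = -lam * (α * n) - Real.log r * n := by ring
    rw [hlogeval] at hlog
    rw [hexpand]
    linarith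
  rw [hKeq] at h'
  have hmain : (Kfun (s/(s+t)) (α/t) * n) * Real.log 2 ≤ (b:ℝ) * Real.log 2 := by
    calc (Kfun (s/(s+t)) (α/t) * n) * Real.log 2
        = (Kfun (s/(s+t)) (α/t) * Real.log 2) * n := by ring
      _ ≤ _ := h'
  exact le_of_mul_le_mul_right hmain hl2pos
end

section
/- Comparison inequality for binary divergences (claim in the proof of Theorem 16). For every real t ≥ 1 and every x ∈ [0,1]: K_{1/(1+t)}(x/t) ≤ K_{t/(1+t)}(x). -/
/-- For `u ≥ 0`, `v > 0`: `u - v ≤ u * log (u / v)`. -/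
lemma sub_le_mul_log (u v : ℝ) (hu : 0 ≤ u) (hv : 0 < v) :
    u - v ≤ u * Real.log (u / v) := by
  rcases eq_or_lt_of_le hu with h | h
  · simp [← h]; linarith
  · have h1 : Real.log (v / u) ≤ v / u - 1 := Real.log_le_sub_one_of_pos (by positivity)
    have h2 : Real.log (u / v) = - Real.log (v / u) := by
      rw [← Real.log_inv]
      congr 1
      field_simp
    have h3 : 1 - v / u ≤ Real.log (u / v) := by rw [h2]; linarith
    have h4 : u * (1 - v / u) ≤ u * Real.log (u / v) :=
      mul_le_mul_of_nonneg_left h3 hu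
    have h5 : u * (1 - v / u) = u - v := by field_simp
    linarith

/-- Two-point log-sum inequality (natural log). -/
lemma logsum (a b c d : ℝ) (ha : 0 ≤ a) (hb : 0 ≤ b) (hc : 0 < c) (hd : 0 < d) :
    (a + b) * Real.log ((a + b) / (c + d)) ≤ a * Real.log (a / c) + b * Real.log (b / d) := by
  have hcd : 0 < c + d := by linarith
  rcases eq_or_lt_of_le (by linarith : (0:ℝ) ≤ a + b) with hs | hs
  · have ha0 : a = 0 := by linarith
    have hb0 : b = 0 := by linarith
    simp [ha0, hb0]
  · set s : ℝ := (a + b) / (c + d) with hsdef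
    have hspos : 0 < s := by positivity
    have k1 : a - c * s ≤ a * Real.log (a / (c * s)) :=
      sub_le_mul_log a (c * s) ha (by positivity)
    have k2 : b - d * s ≤ b * Real.log (b / (d * s)) :=
      sub_le_mul_log b (d * s) hb (by positivity)
    have e1 : a * Real.log (a / (c * s)) = a * Real.log (a / c) - a * Real.log s := by
      rcases eq_or_lt_of_le ha with h | h
      · simp [← h]
      · rw [← div_div, Real.log_div (by positivity) (by positivity)]
        ring
    have e2 : b * Real.log (b / (d * s)) = b * Real.log (b / d) - b * Real.log s := by
      rcases eq_or_lt_of_le hb with h | h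
      · simp [← h]
      · rw [← div_div, Real.log_div (by positivity) (by positivity)]
        ring
    have e3 : a + b - (c + d) * s = 0 := by
      rw [hsdef]; field_simp; ring
    nlinarith [k1, k2]

/-- Two-point log-sum inequality (base 2). -/
lemma logsum2 (a b c d : ℝ) (ha : 0 ≤ a) (hb : 0 ≤ b) (hc : 0 < c) (hd : 0 < d) :
    (a + b) * Real.logb 2 ((a + b) / (c + d)) ≤ a * Real.logb 2 (a / c) + b * Real.logb 2 (b / d) := by
  have h := logsum a b c d ha hb hc hd
  have h2 : (0:ℝ) < Real.log 2 := Real.log_pos (by norm_num)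
  simp only [Real.logb, ← mul_div_assoc]
  rw [← add_div]
  exact div_le_div_of_nonneg_right h h2.le



/-- Comparison inequality for binary divergences (claim in the proof of Theorem 16):
for `t ≥ 1` and `x ∈ [0,1]`, `K_{1/(1+t)}(x/t) ≤ K_{t/(1+t)}(x)`. -/
theorem Kfun_comparison (t : ℝ) (ht : 1 ≤ t) (x : ℝ) (hx : x ∈ Set.Icc (0 : ℝ) 1) :
    Kfun (1 / (1 + t)) (x / t) ≤ Kfun (t / (1 + t)) x := by
  obtain ⟨hx0, hx1⟩ := hx
  have ht0 : (0:ℝ) < t := lt_of_lt_of_le one_pos ht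
  have h1t : (0:ℝ) < 1 + t := by linarith
  have hne : t ≠ 0 := ne_of_gt ht0
  have h1ne : (1 + t) ≠ 0 := ne_of_gt h1t
  rcases eq_or_lt_of_le ht with h1 | h1
  · rw [← h1]; norm_num
  · have htm : (0:ℝ) < t - 1 := by linarith
    have htmne : t - 1 ≠ 0 := ne_of_gt htm
    have hxt : x / t ≤ 1 := by
      rw [div_le_one ht0]; linarith
    have hkey := logsum2 (x - x/t) (1 - x) ((t-1)/(1+t)) (1/(1+t))
      (by rw [sub_nonneg, div_le_iff₀ ht0]; nlinarith)
      (by linarith) (by positivity) (by positivity)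
    rw [show x - x/t + (1 - x) = 1 - x/t by ring] at hkey
    rw [show (t-1)/(1+t) + 1/(1+t) = t/(1+t) by field_simp; ring] at hkey
    rw [show (1 - x/t)/(t/(1+t)) = (1 - x/t) * (1+t) / t by field_simp] at hkey
    rw [show (x - x/t)/((t-1)/(1+t)) = x * (1+t) / t by field_simp] at hkey
    rw [show (1 - x)/(1/(1+t)) = (1-x)*(1+t) by field_simp] at hkey
    unfold Kfun
    rw [show (x/t)/(1/(1+t)) = x * (1+t) / t by field_simp]
    rw [show (1 - x/t)/(1 - 1/(1+t)) = (1 - x/t) * (1+t) / t by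
      rw [show 1 - 1/(1+t) = t/(1+t) by field_simp; ring]; field_simp]
    rw [show x/(t/(1+t)) = x * (1+t) / t by rw [div_div_eq_mul_div]]
    rw [show (1 - x)/(1 - t/(1+t)) = (1-x)*(1+t) by
      rw [show 1 - t/(1+t) = 1/(1+t) by field_simp; ring]; field_simp]
    nlinarith [hkey]
end

section
/- Derandomization of a randomized algorithm on a finite input set, minimization (core of the derandomization Theorem of the appendix). Let I be a nonempty finite set, A a nonempty type, μ a probability mass function on A, and cost : A → I → ℝ≥0. Let ε > 0 and let t be a natural number with t > log₂|I| / log₂(1+ε). Then there exist a₁,…,a_t ∈ A such that for every σ ∈ I: min_{1≤i≤t} cost(a_i, σ) ≤ (1+ε)·E_{a∼μ}[cost(a,σ)]. -/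
open scoped ENNReal NNReal
open MeasureTheory

/-- Derandomization of a randomized algorithm on a finite input set, minimization
(core of the derandomization Theorem of the appendix): if `t > log₂|I| / log₂(1+ε)`,
then there are `t` deterministic algorithms such that on every input, the cheapest of
them costs at most `(1+ε)` times the randomized expected cost. -/
theorem derandomize_min
    {I : Type*} [Fintype I] [Nonempty I]
    {A : Type*} [Nonempty A]
    (μ : PMF A) (cost : A → I → ℝ≥0)
    (ε : ℝ) (hε : 0 < ε)
    (t : ℕ) (ht : Real.logb 2 (Fintype.card I) / Real.logb 2 (1 + ε) < t) :
    ∃ a : Fin t → A, ∀ σ : I, ∃ i : Fin t,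
      (cost (a i) σ : ℝ≥0∞) ≤ ENNReal.ofReal (1 + ε) * ∑' d : A, μ d * (cost d σ : ℝ≥0∞) := by
  classical
  letI : MeasurableSpace A := ⊤
  set C : ℝ≥0∞ := ENNReal.ofReal (1 + ε) with hCdef
  have hC1 : 1 < C := by
    rw [hCdef, show (1:ℝ≥0∞) = ENNReal.ofReal 1 by simp]
    exact (ENNReal.ofReal_lt_ofReal_iff (by linarith)).2 (by linarith)
  have hC0 : C ≠ 0 := (zero_lt_one.trans hC1).ne'
  have hCtop : C ≠ ⊤ := ENNReal.ofReal_ne_top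
  set E : I → ℝ≥0∞ := fun σ => ∑' d : A, μ d * (cost d σ : ℝ≥0∞) with hEdef
  set S : I → Set A := fun σ => {a | (cost a σ : ℝ≥0∞) ≤ C * E σ} with hSdef
  -- Markov's inequality
  have hMarkov : ∀ σ, μ.toMeasure (S σ)ᶜ ≤ C⁻¹ := by
    intro σ
    by_cases htop : E σ = ⊤
    · have hempty : (S σ)ᶜ = ∅ := by
        ext a
        simp [hSdef, htop, ENNReal.mul_top hC0, le_top]
      simp [hempty]
    rw [PMF.toMeasure_apply _ (MeasurableSpace.measurableSet_top)]
    by_cases h0 : E σ = 0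
    · have hz : ∀ a, ((S σ)ᶜ).indicator (⇑μ) a = 0 := by
        intro a
        by_cases ha : a ∈ (S σ)ᶜ
        · have hterm : μ a * (cost a σ : ℝ≥0∞) ≤ E σ := ENNReal.le_tsum a
          rw [h0, le_zero_iff, mul_eq_zero] at hterm
          have hcost : ¬ (cost a σ : ℝ≥0∞) ≤ C * E σ := ha
          rw [h0, mul_zero] at hcost
          have hμa : μ a = 0 := hterm.resolve_right (fun h => hcost (le_of_eq h))
          simp [Set.indicator_apply, ha, hμa]
        · simp [Set.indicator_of_notMem ha]
      calc ∑' a, ((S σ)ᶜ).indicator (⇑μ) a = 0 := by simp [hz]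
        _ ≤ C⁻¹ := zero_le
    · -- main case: 0 < E σ < ⊤
      have key : (C * E σ) * ∑' a, ((S σ)ᶜ).indicator (⇑μ) a ≤ E σ := by
        rw [← ENNReal.tsum_mul_left]
        refine Summable.tsum_le_tsum ?_ ENNReal.summable ENNReal.summable
        intro a
        by_cases ha : a ∈ (S σ)ᶜ
        · rw [Set.indicator_of_mem ha]
          have hlt : C * E σ < (cost a σ : ℝ≥0∞) := not_le.mp ha
          calc C * E σ * μ a = μ a * (C * E σ) := mul_comm _ _
            _ ≤ μ a * (cost a σ : ℝ≥0∞) := mul_le_mul_right hlt.le _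
        · simp [Set.indicator_of_notMem ha]
      set m : ℝ≥0∞ := ∑' a, ((S σ)ᶜ).indicator (⇑μ) a with hm
      have h1 : C * m * E σ ≤ 1 * E σ := by
        rw [one_mul]
        calc C * m * E σ = (C * E σ) * m := by ring
          _ ≤ E σ := key
      have h2 : C * m ≤ 1 := (ENNReal.mul_le_mul_iff_left h0 htop).1 h1
      exact ENNReal.le_inv_iff_mul_le.2 (by rwa [mul_comm])
  -- product measure and union bound
  set π : Measure (Fin t → A) := Measure.pi (fun _ => μ.toMeasure) with hπ
  haveI : IsProbabilityMeasure π := by rw [hπ]; infer_instance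
  have hBadσ : ∀ σ, π (Set.univ.pi fun _ : Fin t => (S σ)ᶜ) ≤ C⁻¹ ^ t := by
    intro σ
    rw [hπ, Measure.pi_pi]
    calc ∏ _i : Fin t, μ.toMeasure (S σ)ᶜ ≤ ∏ _i : Fin t, C⁻¹ :=
          Finset.prod_le_prod' (fun i _ => hMarkov σ)
      _ = C⁻¹ ^ t := by simp
  -- counting inequality
  have hcardpos : (0:ℝ) < (Fintype.card I : ℝ) := by
    exact_mod_cast Fintype.card_pos
  have hlogb : 0 < Real.logb 2 (1 + ε) := Real.logb_pos (by norm_num) (by linarith)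
  have hreal : (Fintype.card I : ℝ) < (1 + ε) ^ t := by
    have h1 : Real.logb 2 (Fintype.card I) < t * Real.logb 2 (1 + ε) :=
      (div_lt_iff₀ hlogb).1 ht
    have h2 : Real.logb 2 (Fintype.card I) < Real.logb 2 ((1 + ε) ^ t) := by
      rwa [Real.logb_pow]
    exact (Real.logb_lt_logb_iff (b := 2) (by norm_num) hcardpos (by positivity)).1 h2
  have hcount : (Fintype.card I : ℝ≥0∞) * C⁻¹ ^ t < 1 := by
    have hlt : (Fintype.card I : ℝ≥0∞) < C ^ t := by
      rw [hCdef, ← ENNReal.ofReal_pow (by linarith),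
        show ((Fintype.card I : ℕ) : ℝ≥0∞) = ENNReal.ofReal (Fintype.card I : ℝ) by
          simp]
      exact (ENNReal.ofReal_lt_ofReal_iff (by positivity)).2 hreal
    rw [← ENNReal.inv_pow, mul_comm, ← ENNReal.div_eq_inv_mul]
    exact ENNReal.div_lt_of_lt_mul (by rwa [one_mul])
  have hBad : π (⋃ σ : I, Set.univ.pi fun _ : Fin t => (S σ)ᶜ) < 1 := by
    calc π (⋃ σ : I, Set.univ.pi fun _ : Fin t => (S σ)ᶜ)
        ≤ ∑' σ : I, π (Set.univ.pi fun _ : Fin t => (S σ)ᶜ) := measure_iUnion_le _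
      _ ≤ ∑' _σ : I, C⁻¹ ^ t := ENNReal.tsum_le_tsum hBadσ
      _ = (Fintype.card I : ℝ≥0∞) * C⁻¹ ^ t := by
          rw [tsum_fintype]
          simp [Finset.sum_const, nsmul_eq_mul]
      _ < 1 := hcount
  have hex : ∃ f : Fin t → A, f ∉ ⋃ σ : I, Set.univ.pi fun _ : Fin t => (S σ)ᶜ := by
    by_contra h
    push_neg at h
    have huniv : (⋃ σ : I, Set.univ.pi fun _ : Fin t => (S σ)ᶜ) = Set.univ :=
      Set.eq_univ_of_forall h
    rw [huniv, measure_univ] at hBad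
    exact lt_irrefl _ hBad
  obtain ⟨f, hf⟩ := hex
  refine ⟨f, fun σ => ?_⟩
  have hnot : f ∉ Set.univ.pi fun _ : Fin t => (S σ)ᶜ :=
    fun hmem => hf (Set.mem_iUnion.2 ⟨σ, hmem⟩)
  simp only [Set.mem_pi, Set.mem_univ, forall_true_left, not_forall,
    Set.mem_compl_iff, not_not] at hnot
  obtain ⟨i, hi⟩ := hnot
  exact ⟨i, hi⟩
end

section
/- Derandomization of a randomized algorithm on a finite input set, maximization (core of the maximization derandomization Theorem of the appendix). Let I be a nonempty finite set, A a nonempty type, μ a probability mass function on A, cost : A → I → ℝ≥0 and opt : I → ℝ≥0 functions, and c ≥ 1 a real, such that cost(a,σ) ≤ opt(σ) for all a ∈ A and σ ∈ I, and opt(σ) ≤ c·E_{a∼μ}[cost(a,σ)] for all σ ∈ I. Let 0 < ε < 1 and let t be a natural number with t > log₂|I| · ((c−1)/ε + 1). Then there exist a₁,…,a_t ∈ A such that for every σ ∈ I there is some 1 ≤ i ≤ t with cost(a_i, σ) ≥ (1−ε)·E_{a∼μ}[cost(a,σ)]. -/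
open scoped ENNReal NNReal Classical

open scoped ENNReal NNReal

private lemma derand_numeric (N t : ℕ) (hN : 1 ≤ N) (q : ℝ) (hq0 : 0 < q) (hq1 : q ≤ 1)
    (ht : Real.logb 2 N * (1 / q) < t) : (1 - q) ^ t * N < 1 := by
  have hN0 : (0:ℝ) < N := by exact_mod_cast hN
  have hlogN : 0 ≤ Real.logb 2 N := Real.logb_nonneg one_lt_two (by exact_mod_cast hN)
  have htpos : 0 < t := by
    by_contra h
    push_neg at h
    interval_cases t
    · simp at ht
      nlinarith [mul_nonneg hlogN (le_of_lt (inv_pos.mpr hq0))]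
  have hlogNq : Real.logb 2 N < q * t := by
    rw [mul_one_div] at ht
    calc Real.logb 2 N = (Real.logb 2 N / q) * q := by field_simp
    _ < t * q := by exact mul_lt_mul_of_pos_right ht hq0
    _ = q * t := mul_comm _ _
  rcases eq_or_lt_of_le hq1 with h1 | h1
  · -- q = 1
    subst h1
    have : ((1:ℝ) - 1) ^ t * N = 0 := by
      simp [zero_pow htpos.ne']
    rw [this]; norm_num
  · -- q < 1, let r = 1 - q
    set r : ℝ := 1 - q with hr
    have hr0 : 0 < r := by simp [hr]; linarith
    have hr1 : r < 1 := by simp [hr]; linarith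
    have hlog2 : Real.log 2 < 1 := by
      have := Real.log_two_lt_d9; linarith
    have hrexp : r ≤ Real.exp (-q * Real.log 2) := by
      have h2 : (-q * Real.log 2) + 1 ≤ Real.exp (-q * Real.log 2) := Real.add_one_le_exp _
      have : r ≤ (-q * Real.log 2) + 1 := by
        have hl2 : 0 < Real.log 2 := Real.log_pos one_lt_two
        nlinarith
      linarith
    have hlogr : Real.logb 2 r ≤ -q := by
      rw [Real.logb, div_le_iff₀ (Real.log_pos one_lt_two)]
      have := Real.log_le_log hr0 hrexp
      rw [Real.log_exp] at this
      linarith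
    have key : Real.logb 2 (r ^ t * N) < 0 := by
      rw [Real.logb_mul (by positivity) (by positivity), Real.logb_pow]
      have h3 : (t:ℝ) * Real.logb 2 r ≤ (t:ℝ) * (-q) :=
        mul_le_mul_of_nonneg_left hlogr (by positivity)
      nlinarith
    have := (Real.logb_neg_iff one_lt_two (by positivity)).mp key
    exact this


private lemma derand_mass {A : Type*} (μ : PMF A) (cost' : A → ℝ≥0∞) (o : ℝ≥0∞) (ho_fin : o ≠ ⊤)
    (c ε : ℝ) (hc : 1 ≤ c) (hε0 : 0 < ε) (hε1 : ε < 1)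
    (hcost : ∀ a, cost' a ≤ o)
    (hcomp : o ≤ ENNReal.ofReal c * ∑' d, μ d * cost' d) :
    ENNReal.ofReal (ε / (c - 1 + ε)) ≤
      ∑' a, @ite ℝ≥0∞ (ENNReal.ofReal (1 - ε) * (∑' d, μ d * cost' d) ≤ cost' a)
        (Classical.propDecidable _) (μ a : ℝ≥0∞) 0 := by
  set e : ℝ≥0∞ := ∑' d, μ d * cost' d with he
  have hD : 0 < c - 1 + ε := by linarith
  have hq1 : ε / (c - 1 + ε) ≤ 1 := by rw [div_le_one hD]; linarith
  have he_le : e ≤ o := by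
    calc e ≤ ∑' d, μ d * o := ENNReal.tsum_le_tsum fun d => mul_le_mul_right (hcost d) _
    _ = o := by rw [ENNReal.tsum_mul_right, μ.tsum_coe, one_mul]
  have he_fin : e ≠ ⊤ := ne_top_of_le_ne_top ho_fin he_le
  by_cases he0 : e = 0
  · have hall : ∀ a, (@ite ℝ≥0∞ (ENNReal.ofReal (1 - ε) * e ≤ cost' a)
        (Classical.propDecidable _) (μ a : ℝ≥0∞) 0) = μ a := by
      intro a; rw [if_pos]; rw [he0, mul_zero]; exact zero_le
    rw [tsum_congr hall, μ.tsum_coe]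
    exact ENNReal.ofReal_le_one.mpr hq1
  · set P : ℝ≥0∞ := ∑' a, @ite ℝ≥0∞ (ENNReal.ofReal (1 - ε) * e ≤ cost' a)
        (Classical.propDecidable _) (μ a : ℝ≥0∞) 0 with hP
    set Q : ℝ≥0∞ := ∑' a, @ite ℝ≥0∞ (ENNReal.ofReal (1 - ε) * e ≤ cost' a)
        (Classical.propDecidable _) 0 (μ a : ℝ≥0∞) with hQ
    have hPQ : P + Q = 1 := by
      rw [hP, hQ, ← ENNReal.tsum_add, ← μ.tsum_coe]
      exact tsum_congr fun a => by split_ifs <;> simp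
    have hP1 : P ≤ 1 := le_of_le_of_eq (le_add_right (le_refl P)) hPQ
    have hQ1 : Q ≤ 1 := le_of_le_of_eq (le_add_left (le_refl Q)) hPQ
    have hkey : e ≤ P * (ENNReal.ofReal c * e) + Q * (ENNReal.ofReal (1 - ε) * e) := by
      have step : e ≤ P * o + Q * (ENNReal.ofReal (1 - ε) * e) := by
        rw [hP, hQ, ← ENNReal.tsum_mul_right, ← ENNReal.tsum_mul_right, ← ENNReal.tsum_add]
        refine ENNReal.tsum_le_tsum fun a => ?_
        split_ifs with h
        · simp only [zero_mul, add_zero]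
          exact mul_le_mul_right (hcost a) _
        · simp only [zero_mul, zero_add]
          exact mul_le_mul_right (le_of_lt (not_le.mp h)) _
      calc e ≤ P * o + Q * (ENNReal.ofReal (1 - ε) * e) := step
      _ ≤ P * (ENNReal.ofReal c * e) + Q * (ENNReal.ofReal (1 - ε) * e) := by
          exact add_le_add_left (mul_le_mul_right hcomp P) _
    -- pass to reals
    have hPfin : P ≠ ⊤ := ne_top_of_le_ne_top ENNReal.one_ne_top hP1
    have hQfin : Q ≠ ⊤ := ne_top_of_le_ne_top ENNReal.one_ne_top hQ1
    have hrhs_fin : P * (ENNReal.ofReal c * e) + Q * (ENNReal.ofReal (1 - ε) * e) ≠ ⊤ := by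
      apply ENNReal.add_ne_top.mpr
      constructor <;> exact ENNReal.mul_ne_top (by assumption) (ENNReal.mul_ne_top ENNReal.ofReal_ne_top he_fin)
    have hreal := ENNReal.toReal_mono hrhs_fin hkey
    rw [ENNReal.toReal_add (ENNReal.mul_ne_top hPfin (ENNReal.mul_ne_top ENNReal.ofReal_ne_top he_fin))
        (ENNReal.mul_ne_top hQfin (ENNReal.mul_ne_top ENNReal.ofReal_ne_top he_fin)),
      ENNReal.toReal_mul, ENNReal.toReal_mul, ENNReal.toReal_mul, ENNReal.toReal_mul,
      ENNReal.toReal_ofReal (by linarith : (0:ℝ) ≤ c),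
      ENNReal.toReal_ofReal (by linarith : (0:ℝ) ≤ 1 - ε)] at hreal
    have hpq1 : P.toReal + Q.toReal = 1 := by
      rw [← ENNReal.toReal_add hPfin hQfin, hPQ, ENNReal.toReal_one]
    have her : 0 < e.toReal := ENNReal.toReal_pos he0 he_fin
    set p := P.toReal
    set qq := Q.toReal
    set er := e.toReal
    have h1 : 1 ≤ p * c + qq * (1 - ε) := by nlinarith
    have hp : ε / (c - 1 + ε) ≤ p := by
      rw [div_le_iff₀ hD]; nlinarith
    exact ENNReal.ofReal_le_of_le_toReal hp


private lemma derand_select {A : Type*} [Nonempty A] {I : Type*} (μ : PMF A)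
    (good : A → I → Prop) (q : ℝ) (hq0 : 0 < q)
    (hmass : ∀ σ : I, ENNReal.ofReal q ≤ ∑' a, if good a σ then (μ a : ℝ≥0∞) else 0)
    (S : Finset I) :
    ∃ a : A, q * S.card ≤ ((S.filter (good a)).card : ℝ) := by
  by_contra hcon
  push_neg at hcon
  rcases S.eq_empty_or_nonempty with rfl | hSne
  · obtain ⟨a⟩ := ‹Nonempty A›
    have := hcon a
    simp at this
  have hSpos : (0:ℝ) < q * S.card := by
    have : (0:ℝ) < S.card := by exact_mod_cast Finset.card_pos.mpr hSne
    positivity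
  set m : ℕ := ⌈q * S.card⌉₊ - 1 with hm
  have hceil1 : 1 ≤ ⌈q * S.card⌉₊ := Nat.one_le_iff_ne_zero.mpr (by
    simp [Nat.ceil_eq_zero, not_le, hSpos])
  have hmlt : (m : ℝ) < q * S.card := by
    have h1 : (⌈q * S.card⌉₊ : ℝ) < q * S.card + 1 := Nat.ceil_lt_add_one (le_of_lt hSpos)
    have h2 : (m : ℝ) = (⌈q * S.card⌉₊ : ℝ) - 1 := by
      rw [hm, Nat.cast_sub hceil1, Nat.cast_one]
    linarith
  have hcard_le : ∀ a : A, (S.filter (good a)).card ≤ m := by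
    intro a
    have := hcon a
    have hlt : (S.filter (good a)).card < ⌈q * S.card⌉₊ := Nat.lt_ceil.mpr this
    omega
  -- chain in ℝ≥0∞
  have chain : ENNReal.ofReal (q * S.card) ≤ (m : ℝ≥0∞) := by
    calc ENNReal.ofReal (q * S.card)
        = ENNReal.ofReal q * S.card := by
          rw [ENNReal.ofReal_mul (le_of_lt hq0), ENNReal.ofReal_natCast]
      _ = ∑ _σ ∈ S, ENNReal.ofReal q := by rw [Finset.sum_const, nsmul_eq_mul, mul_comm]
      _ ≤ ∑ σ ∈ S, ∑' a, if good a σ then (μ a : ℝ≥0∞) else 0 :=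
          Finset.sum_le_sum fun σ _ => hmass σ
      _ = ∑' a, ∑ σ ∈ S, (if good a σ then (μ a : ℝ≥0∞) else 0) :=
          (Summable.tsum_finsetSum (fun σ _ => ENNReal.summable)).symm
      _ = ∑' a, ((S.filter (good a)).card : ℝ≥0∞) * μ a := by
          refine tsum_congr fun a => ?_
          rw [← Finset.sum_filter, Finset.sum_const, nsmul_eq_mul]
      _ ≤ ∑' a, (m : ℝ≥0∞) * μ a :=
          ENNReal.tsum_le_tsum fun a =>
            mul_le_mul_left (by exact_mod_cast hcard_le a) _
      _ = (m : ℝ≥0∞) := by rw [ENNReal.tsum_mul_left, μ.tsum_coe, mul_one]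
  have : q * S.card ≤ (m : ℝ) := by
    have := (ENNReal.ofReal_le_iff_le_toReal (by simp)).mp chain
    simpa using this
  linarith

/-- Derandomization of a randomized algorithm on a finite input set, maximization
(core of the maximization derandomization Theorem of the appendix): if the expected
profit of the randomized algorithm `μ` is strictly `c`-competitive against `opt`,
profits never exceed `opt`, and `t > log₂|I| · ((c−1)/ε + 1)`, then there are `t`
deterministic algorithms such that on every input some one of them obtains profit at
least `(1−ε)` times the randomized expected profit. -/
theorem derandomize_max
    {I : Type*} [Fintype I] [Nonempty I]
    {A : Type*} [Nonempty A]
    (μ : PMF A) (cost : A → I → ℝ≥0) (opt : I → ℝ≥0)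
    (c : ℝ) (hc : 1 ≤ c)
    (hbound : ∀ (a : A) (σ : I), cost a σ ≤ opt σ)
    (hcomp : ∀ σ : I, (opt σ : ℝ≥0∞) ≤ ENNReal.ofReal c * ∑' d : A, μ d * (cost d σ : ℝ≥0∞))
    (ε : ℝ) (hε0 : 0 < ε) (hε1 : ε < 1)
    (t : ℕ) (ht : Real.logb 2 (Fintype.card I) * ((c - 1) / ε + 1) < t) :
    ∃ a : Fin t → A, ∀ σ : I, ∃ i : Fin t,
      ENNReal.ofReal (1 - ε) * ∑' d : A, μ d * (cost d σ : ℝ≥0∞) ≤ (cost (a i) σ : ℝ≥0∞) := by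
  classical
  set q : ℝ := ε / (c - 1 + ε) with hqdef
  have hD : 0 < c - 1 + ε := by linarith
  have hq0 : 0 < q := div_pos hε0 hD
  have hq1 : q ≤ 1 := by rw [hqdef, div_le_one hD]; linarith
  obtain ⟨good, hgood⟩ : ∃ g : A → I → Prop, g = fun a σ =>
      ENNReal.ofReal (1 - ε) * (∑' d : A, μ d * (cost d σ : ℝ≥0∞)) ≤ (cost a σ : ℝ≥0∞) :=
    ⟨_, rfl⟩
  -- mass lemma applied
  have hmass : ∀ σ : I, ENNReal.ofReal q ≤
      ∑' a, if good a σ then (μ a : ℝ≥0∞) else 0 := by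
    intro σ
    rw [hgood]
    exact derand_mass μ (fun a => ((cost a σ : ℝ≥0∞))) (opt σ : ℝ≥0∞) ENNReal.coe_ne_top
      c ε hc hε0 hε1 (fun a => ENNReal.coe_le_coe.mpr (hbound a σ)) (hcomp σ)
  -- selection
  have hsel : ∀ S : Finset I, ∃ a : A, q * S.card ≤ ((S.filter (good a)).card : ℝ) :=
    fun S => derand_select μ good q hq0 hmass S
  choose pick hpick using hsel
  -- recursive sequence of uncovered sets
  set Sf : ℕ → Finset I := fun n =>
    Nat.rec Finset.univ (fun _ Sn => Sn \ Sn.filter (good (pick Sn))) n with hSf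
  have hS0 : Sf 0 = Finset.univ := rfl
  have hSsucc : ∀ n, Sf (n + 1) = Sf n \ (Sf n).filter (good (pick (Sf n))) := fun n => rfl
  set N : ℕ := Fintype.card I with hN
  have hcard : ∀ n, ((Sf n).card : ℝ) ≤ (1 - q) ^ n * N := by
    intro n
    induction n with
    | zero => simp [hS0, hN, Finset.card_univ]
    | succ n ih =>
      have hsub : (Sf n).filter (good (pick (Sf n))) ⊆ Sf n := Finset.filter_subset _ _
      have hcards : (Sf (n+1)).card = (Sf n).card - ((Sf n).filter (good (pick (Sf n)))).card := by
        rw [hSsucc n, Finset.card_sdiff_of_subset hsub]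
      have hle : ((Sf n).filter (good (pick (Sf n)))).card ≤ (Sf n).card :=
        Finset.card_le_card hsub
      have hcast : ((Sf (n+1)).card : ℝ)
          = ((Sf n).card : ℝ) - (((Sf n).filter (good (pick (Sf n)))).card : ℝ) := by
        rw [hcards, Nat.cast_sub hle]
      have hpk := hpick (Sf n)
      have h1q : (0:ℝ) ≤ 1 - q := by linarith
      calc ((Sf (n+1)).card : ℝ) ≤ ((Sf n).card : ℝ) - q * (Sf n).card := by
            rw [hcast]; linarith
        _ = (1 - q) * (Sf n).card := by ring
        _ ≤ (1 - q) * ((1 - q) ^ n * N) := mul_le_mul_of_nonneg_left ih h1q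
        _ = (1 - q) ^ (n+1) * N := by ring
  -- numeric bound
  have hN1 : 1 ≤ N := Fintype.card_pos
  have htq : Real.logb 2 N * (1 / q) < t := by
    have : (c - 1) / ε + 1 = 1 / q := by
      rw [hqdef]; field_simp
    rw [← this]; exact_mod_cast ht
  have hnum := derand_numeric N t hN1 q hq0 hq1 htq
  have hempty : Sf t = ∅ := by
    have h1 : ((Sf t).card : ℝ) < 1 := lt_of_le_of_lt (hcard t) hnum
    have : (Sf t).card = 0 := by exact_mod_cast Nat.lt_one_iff.mp (by exact_mod_cast h1)
    exact Finset.card_eq_zero.mp this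
  -- coverage
  have hcov : ∀ n (σ : I), σ ∉ Sf n → ∃ j, j < n ∧ good (pick (Sf j)) σ := by
    intro n
    induction n with
    | zero => intro σ hσ; exact absurd (Finset.mem_univ σ) hσ
    | succ n ih =>
      intro σ hσ
      by_cases hmem : σ ∈ Sf n
      · refine ⟨n, Nat.lt_succ_self n, ?_⟩
        rw [hSsucc n, Finset.mem_sdiff] at hσ
        push_neg at hσ
        exact (Finset.mem_filter.mp (hσ hmem)).2
      · obtain ⟨j, hj, hg⟩ := ih σ hmem
        exact ⟨j, Nat.lt_succ_of_lt hj, hg⟩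
  refine ⟨fun i => pick (Sf i), fun σ => ?_⟩
  obtain ⟨j, hj, hg⟩ := hcov t σ (by simp [hempty])
  rw [hgood] at hg
  exact ⟨⟨j, hj⟩, hg⟩
end
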